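/- For every λ ∈ [0,1) and x ≥ 0, one has (1−λ²)·e^{−x/2}·Σ_{n=0}^∞ λ^{2n}·L_{2n}(x) = (1/2)·((1+λ)·e^{−((1+λ)/(1−λ))·x/2} + (1−λ)·e^{−((1−λ)/(1+λ))·x/2}), where L_n denotes the nth Laguerre polynomial. -/

import Mathlib

/-- The `n`th (simple) Laguerre polynomial, `L_n(x) = Σ_{k=0}^n C(n,k)·(−x)^k/k!`. -/
noncomputable def laguerre (n : ℕ) (x : ℝ) : ℝ :=
  ∑ k ∈ Finset.range (n + 1), (n.choose k : ℝ) * (-x) ^ k / (Nat.factorial k : ℝ)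

lemma hasSum_exp_real (y : ℝ) :
    HasSum (fun n : ℕ => y ^ n / (n.factorial : ℝ)) (Real.exp y) := by
  rw [Real.exp_eq_exp_ℝ]
  exact NormedSpace.expSeries_div_hasSum_exp y

lemma hasSum_choose_geom {t : ℝ} (ht : |t| < 1) (k : ℕ) :
    HasSum (fun n : ℕ => (n.choose k : ℝ) * t ^ n) (t ^ k * (1 / (1 - t) ^ (k + 1))) := by
  have ht' : ‖t‖ < 1 := by simpa [Real.norm_eq_abs] using ht
  have h := (hasSum_choose_mul_geometric_of_norm_lt_one k ht').mul_left (t ^ k)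
  have h2 : HasSum (fun n : ℕ => (((n + k).choose k : ℝ)) * t ^ (n + k))
      (t ^ k * (1 / (1 - t) ^ (k + 1))) := by
    have e : (fun n : ℕ => (((n + k).choose k : ℝ)) * t ^ (n + k))
        = fun i => t ^ k * (((i + k).choose k : ℝ) * t ^ i) := by
      funext n
      rw [pow_add]; ring
    rw [e]; exact h
  rw [hasSum_nat_add_iff (f := fun n => (n.choose k : ℝ) * t ^ n) k] at h2
  have hz : ∑ i ∈ Finset.range k, (i.choose k : ℝ) * t ^ i = 0 := by
    apply Finset.sum_eq_zero
    intro i hi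
    rw [Nat.choose_eq_zero_of_lt (Finset.mem_range.1 hi)]
    simp
  rw [hz, add_zero] at h2
  exact h2

lemma hasSum_B {t : ℝ} (ht : |t| < 1) (y : ℝ) :
    HasSum (fun k : ℕ => t ^ k * (1 / (1 - t) ^ (k + 1)) * (y ^ k / (k.factorial : ℝ)))
      ((1 - t)⁻¹ * Real.exp (t * y / (1 - t))) := by
  have h1t : (1 : ℝ) - t ≠ 0 := by
    have h := (abs_lt.1 ht).2
    intro hc; nlinarith
  have h := (hasSum_exp_real (t * y / (1 - t))).mul_left ((1 - t)⁻¹)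
  have e : (fun k : ℕ => t ^ k * (1 / (1 - t) ^ (k + 1)) * (y ^ k / (k.factorial : ℝ)))
      = fun k : ℕ => (1 - t)⁻¹ * ((t * y / (1 - t)) ^ k / (k.factorial : ℝ)) := by
    funext k
    have hk : (k.factorial : ℝ) ≠ 0 := Nat.cast_ne_zero.2 k.factorial_ne_zero
    rw [div_pow, mul_pow, pow_succ]
    field_simp
  rw [e]; exact h

lemma laguerre_genfun {t : ℝ} (ht : |t| < 1) {x : ℝ} (hx : 0 ≤ x) :
    HasSum (fun n : ℕ => t ^ n * laguerre n x)
      ((1 - t)⁻¹ * Real.exp (t * (-x) / (1 - t))) := by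
  set F : ℕ × ℕ → ℝ :=
    fun p => (p.2.choose p.1 : ℝ) * t ^ p.2 * ((-x) ^ p.1 / (p.1.factorial : ℝ)) with hF
  have htabs : |(|t|)| < 1 := by rwa [abs_abs]
  -- summability of |F|
  have habs : Summable (fun p : ℕ × ℕ => |F p|) := by
    have heq : (fun p : ℕ × ℕ => |F p|) =
        fun p => (p.2.choose p.1 : ℝ) * |t| ^ p.2 * (x ^ p.1 / (p.1.factorial : ℝ)) := by
      funext p
      rw [hF]
      rw [abs_mul, abs_mul, abs_div, abs_pow, abs_pow, abs_neg, abs_of_nonneg hx,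
        Nat.abs_cast, Nat.abs_cast]
    rw [heq]
    rw [summable_prod_of_nonneg]
    · constructor
      · intro k
        exact ((hasSum_choose_geom htabs k).summable.mul_right (x ^ k / (k.factorial : ℝ)))
      · have hfib : ∀ k : ℕ,
            ∑' n, (n.choose k : ℝ) * |t| ^ n * (x ^ k / (k.factorial : ℝ))
              = |t| ^ k * (1 / (1 - |t|) ^ (k + 1)) * (x ^ k / (k.factorial : ℝ)) := by
          intro k
          exact ((hasSum_choose_geom htabs k).mul_right _).tsum_eq
        simpa [hfib] using (hasSum_B htabs x).summable
    · intro p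
      positivity
  have hFsum : Summable F := summable_abs_iff.1 habs
  -- identify the total sum via the k-fibers
  have hmarg_k : ∀ k : ℕ, HasSum (fun n => F (k, n))
      (t ^ k * (1 / (1 - t) ^ (k + 1)) * ((-x) ^ k / (k.factorial : ℝ))) := by
    intro k
    exact (hasSum_choose_geom ht k).mul_right _
  have htot : HasSum F ((1 - t)⁻¹ * Real.exp (t * (-x) / (1 - t))) := by
    have h1 := hFsum.hasSum
    have h2 := h1.prod_fiberwise hmarg_k
    have h3 := hasSum_B ht (-x)
    rwa [← h3.unique h2] at h1
  -- swap and identify the n-fibers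
  have hswap : Summable (F ∘ Prod.swap) := by
    exact ((Equiv.prodComm ℕ ℕ).summable_iff).2 hFsum
  have hmarg_n : ∀ n : ℕ, HasSum (fun k => F (k, n)) (t ^ n * laguerre n x) := by
    intro n
    have hz : ∀ k ∉ Finset.range (n + 1), F (k, n) = 0 := by
      intro k hk
      rw [hF]
      simp only
      have hklt : n < k := by
        by_contra hc
        exact hk (Finset.mem_range.2 (by omega))
      rw [Nat.choose_eq_zero_of_lt hklt]
      simp
    have h : HasSum (fun k => F (k, n)) _ := hasSum_sum_of_ne_finset_zero hz
    have hsum : ∑ k ∈ Finset.range (n + 1), F (k, n) = t ^ n * laguerre n x := by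
      rw [laguerre, Finset.mul_sum]
      apply Finset.sum_congr rfl
      intro k _
      rw [hF]; ring
    rwa [hsum] at h
  have htot' : HasSum (F ∘ Prod.swap) ((1 - t)⁻¹ * Real.exp (t * (-x) / (1 - t))) :=
    ((Equiv.prodComm ℕ ℕ).hasSum_iff).2 htot
  exact htot'.prod_fiberwise hmarg_n

/-- For `λ ∈ [0,1)` and `x ≥ 0`:
`(1−λ²)·e^{−x/2}·Σ_n λ^{2n}·L_{2n}(x)
  = (1/2)·((1+λ)·e^{−((1+λ)/(1−λ))·x/2} + (1−λ)·e^{−((1−λ)/(1+λ))·x/2})`. -/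
theorem stmt_13 (l : ℝ) (hl : l ∈ Set.Ico (0 : ℝ) 1) (x : ℝ) (hx : 0 ≤ x) :
    (1 - l ^ 2) * Real.exp (-x / 2) * ∑' n : ℕ, l ^ (2 * n) * laguerre (2 * n) x
      = (1 / 2) * ((1 + l) * Real.exp (-(((1 + l) / (1 - l)) * x) / 2)
          + (1 - l) * Real.exp (-(((1 - l) / (1 + l)) * x) / 2)) := by
  obtain ⟨hl0, hl1⟩ := hl
  have h1l : (1 : ℝ) - l ≠ 0 := by intro h; linarith
  have h2l : (1 : ℝ) + l ≠ 0 := by intro h; linarith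
  have habs : |l| < 1 := by rwa [abs_of_nonneg hl0]
  have habs' : |(-l)| < 1 := by rwa [abs_neg]
  have h1 := laguerre_genfun habs hx
  have h2 := laguerre_genfun habs' hx
  set f : ℕ → ℝ := fun n => (l ^ n * laguerre n x + (-l) ^ n * laguerre n x) / 2 with hfdef
  set S : ℝ := ((1 - l)⁻¹ * Real.exp (l * (-x) / (1 - l))
      + (1 - (-l))⁻¹ * Real.exp ((-l) * (-x) / (1 - (-l)))) / 2 with hSdef
  have hf : HasSum f S := (h1.add h2).div_const 2
  have hinj : Function.Injective (fun n : ℕ => 2 * n) := fun a b h => by exact mul_left_cancel₀ two_ne_zero h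
  have hvanish : ∀ n ∉ Set.range (fun n : ℕ => 2 * n), f n = 0 := by
    intro n hn
    have hodd : Odd n := by
      rcases Nat.even_or_odd n with he | ho
      · obtain ⟨m, hm⟩ := he
        exact absurd ⟨m, by show 2 * m = n; omega⟩ hn
      · exact ho
    rw [hfdef]
    simp only
    rw [hodd.neg_pow]
    ring
  have hcomp : (fun n : ℕ => l ^ (2 * n) * laguerre (2 * n) x) = f ∘ (fun n : ℕ => 2 * n) := by
    funext n
    simp only [Function.comp, hfdef]
    rw [(even_two_mul n).neg_pow]
    ring
  have hS : HasSum (fun n : ℕ => l ^ (2 * n) * laguerre (2 * n) x) S := by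
    rw [hcomp]
    exact (hinj.hasSum_iff hvanish).2 hf
  rw [hS.tsum_eq, hSdef]
  have e1 : Real.exp (-(((1 + l) / (1 - l)) * x) / 2)
      = Real.exp (-x / 2) * Real.exp (l * (-x) / (1 - l)) := by
    rw [← Real.exp_add]
    congr 1
    field_simp
    ring
  have e2 : Real.exp (-(((1 - l) / (1 + l)) * x) / 2)
      = Real.exp (-x / 2) * Real.exp ((-l) * (-x) / (1 - (-l))) := by
    rw [← Real.exp_add]
    congr 1
    rw [sub_neg_eq_add]
    field_simp
    ring
  rw [e1, e2]
  have hne : (1 : ℝ) - (-l) ≠ 0 := by rw [sub_neg_eq_add]; exact h2l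
  field_simp
  ring
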